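/- arXiv:1512.09094 — 2 statements merged into one kernel-verified Lean document; each statement's English description precedes it below -/
import Mathlib

section
/- Let M > 0 and R > M, and let φ: [0,∞)×[M,R] → ℝ be such that for every v ≥ 0 the function φ(v,·) is C³ on [M,R], with all partial r-derivatives up to order three jointly measurable in (v,r). Then ∫_0^∞ ∫_M^R (∂_rφ(v,r))² dr dv ≤ (16/9)·∫_0^∞ ∫_M^R ( ∂_r∂_r( (r−M)²·∂_rφ )(v,r) )² dr dv, both sides taking values in [0,∞]. -/
open MeasureTheory Set

/-- The partial derivative in the second (radial) variable `r`. -/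
noncomputable def pr (ψ : ℝ → ℝ → ℝ) (v r : ℝ) : ℝ := deriv (fun s => ψ v s) r

/-- The partial derivative in the first (advanced-time) variable `v`. -/
noncomputable def pv (ψ : ℝ → ℝ → ℝ) (v r : ℝ) : ℝ := deriv (fun t => ψ t r) v

/-- The spherically symmetric reduced wave equation on extremal Reissner--Nordström,
in ingoing Eddington--Finkelstein coordinates `(v, r)`, with mass parameter `M`:
`((r−M)²/r²)·∂_r²ψ + 2·∂_v∂_rψ + (2/r)·∂_vψ + (2(r−M)/r²)·∂_rψ = 0`. -/
def WaveEq (M : ℝ) (ψ : ℝ → ℝ → ℝ) (v r : ℝ) : Prop :=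
  ((r - M) ^ 2 / r ^ 2) * pr (pr ψ) v r + 2 * pv (pr ψ) v r
    + (2 / r) * pv ψ v r + (2 * (r - M) / r ^ 2) * pr ψ v r = 0
set_option maxHeartbeats 1000000

lemma intOn_bdd {f : ℝ → ℝ} {s : Set ℝ} (hs : MeasurableSet s) (hfin : volume s < ⊤)
    (hf : ContinuousOn f s) {K : ℝ} (hK : ∀ x ∈ s, |f x| ≤ K) : IntegrableOn f s := by
  refine ⟨hf.aestronglyMeasurable hs, ?_⟩
  refine HasFiniteIntegral.restrict_of_bounded (C := K) hfin ?_
  exact (ae_restrict_iff' hs).2 (Filter.Eventually.of_forall fun x hx => by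
    simpa [Real.norm_eq_abs] using hK x hx)

lemma hardy_step (a b : ℝ) (hab : a < b) (m : ℕ) (u u' : ℝ → ℝ)
    (hu : ContinuousOn u (Icc a b))
    (hder : ∀ x ∈ Ioo a b, HasDerivAt u (u' x) x)
    (hu' : ContinuousOn u' (Ioo a b))
    {C D : ℝ}
    (hC : ∀ r ∈ Ioo a b, (u r)^2 ≤ C * (r - a)^(2*m+2))
    (hD : ∀ r ∈ Ioo a b, (u' r)^2 ≤ D * (r - a)^(2*m)) :
    ∫ r in Ioo a b, (u r / (r - a)^(m+1))^2 ≤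
      (4/(2*(m:ℝ)+1)^2) * ∫ r in Ioo a b, (u' r / (r - a)^m)^2 := by
  set k : ℝ := 2*(m:ℝ)+1 with hk
  have hk_pos : 0 < k := by rw [hk]; positivity
  clear_value k
  set p : ℝ → ℝ := fun r => u r / (r - a)^(m+1) with hp
  set q : ℝ → ℝ := fun r => u' r / (r - a)^m with hq
  -- pointwise bounds
  have hPb : ∀ r ∈ Ioo a b, p r ^ 2 ≤ C := by
    intro r hr
    have hra : 0 < r - a := sub_pos.2 hr.1
    have hw : 0 < (r - a)^(2*m+2) := pow_pos hra _
    have e : ((r-a)^(m+1))^2 = (r-a)^(2*m+2) := by rw [← pow_mul]; congr 1; ring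
    have : p r ^ 2 = u r ^ 2 / (r-a)^(2*m+2) := by rw [hp, div_pow, e]
    rw [this, div_le_iff₀ hw]
    exact hC r hr
  have hQb : ∀ r ∈ Ioo a b, q r ^ 2 ≤ D := by
    intro r hr
    have hra : 0 < r - a := sub_pos.2 hr.1
    have hw : 0 < (r - a)^(2*m) := pow_pos hra _
    have e : ((r-a)^m)^2 = (r-a)^(2*m) := by rw [← pow_mul]; congr 1; ring
    have : q r ^ 2 = u' r ^ 2 / (r-a)^(2*m) := by rw [hq, div_pow, e]
    rw [this, div_le_iff₀ hw]
    exact hD r hr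
  have hmid : (a+b)/2 ∈ Ioo a b := ⟨by linarith, by linarith⟩
  have hC0 : 0 ≤ C := le_trans (sq_nonneg _) (hPb _ hmid)
  have hD0 : 0 ≤ D := le_trans (sq_nonneg _) (hQb _ hmid)
  have hpq : ∀ r ∈ Ioo a b, |p r * q r| ≤ Real.sqrt (C*D) := by
    intro r hr
    have h2 : (p r * q r)^2 ≤ C * D := by
      rw [mul_pow]
      exact mul_le_mul (hPb r hr) (hQb r hr) (sq_nonneg _) hC0
    calc |p r * q r| = Real.sqrt ((p r * q r)^2) := (Real.sqrt_sq_eq_abs _).symm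
      _ ≤ Real.sqrt (C*D) := Real.sqrt_le_sqrt h2
  -- continuity and integrability
  have hpc : ContinuousOn p (Ioo a b) := by
    refine (hu.mono Ioo_subset_Icc_self).div
      (((continuous_id.sub continuous_const).pow (m+1)).continuousOn) ?_
    exact fun x hx => pow_ne_zero _ ((sub_pos.2 hx.1).ne')
  have hqc : ContinuousOn q (Ioo a b) := by
    refine hu'.div (((continuous_id.sub continuous_const).pow m).continuousOn) ?_
    exact fun x hx => pow_ne_zero _ ((sub_pos.2 hx.1).ne')
  have hfin : volume (Ioo a b) < ⊤ := measure_Ioo_lt_top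
  have hPint : IntegrableOn (fun r => p r ^ 2) (Ioo a b) := by
    refine intOn_bdd measurableSet_Ioo hfin (hpc.pow 2) (K := C) ?_
    exact fun x hx => by rw [abs_of_nonneg (sq_nonneg _)]; exact hPb x hx
  have hQint : IntegrableOn (fun r => q r ^ 2) (Ioo a b) := by
    refine intOn_bdd measurableSet_Ioo hfin (hqc.pow 2) (K := D) ?_
    exact fun x hx => by rw [abs_of_nonneg (sq_nonneg _)]; exact hQb x hx
  have hpqint : IntegrableOn (fun r => p r * q r) (Ioo a b) :=
    intOn_bdd measurableSet_Ioo hfin (hpc.mul hqc) hpq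
  set A : ℝ := ∫ r in Ioo a b, p r ^ 2 with hA
  set B : ℝ := ∫ r in Ioo a b, q r ^ 2 with hB
  clear_value A B
  have hB0 : 0 ≤ B := by
    rw [hB]; exact setIntegral_nonneg measurableSet_Ioo fun x _ => sq_nonneg _
  -- the key estimate for every ε
  have key : ∀ ε ∈ Ioo a b, A ≤ (C + C/k) * (ε - a) + (A/2 + 2/k^2 * B) := by
    intro ε hε
    have hεa : 0 < ε - a := sub_pos.2 hε.1
    set F : ℝ → ℝ := fun x => -(u x^2 / (k * (x-a)^(2*m+1))) with hF
    set F' : ℝ → ℝ := fun x => p x ^ 2 - (2/k) * (p x * q x) with hF'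
    have hFd : ∀ x ∈ Ioo a b, HasDerivAt F (F' x) x := by
      intro x hx
      have hxa : 0 < x - a := sub_pos.2 hx.1
      have h1 : HasDerivAt (fun y => u y ^ 2) (2 * u x * u' x) x := by
        have := (hder x hx).fun_pow 2
        simpa [pow_one] using this
      have h2 : HasDerivAt (fun y => k * (y - a)^(2*m+1))
          (k * ((2*m+1) * (x-a)^(2*m))) x := by
        have := (((hasDerivAt_id x).sub_const a).pow (2*m+1)).const_mul k
        simpa [mul_one] using this
      have hne : k * (x-a)^(2*m+1) ≠ 0 :=
        mul_ne_zero (ne_of_gt hk_pos) (pow_ne_zero _ (ne_of_gt hxa))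
      have h3 := (h1.fun_div h2 hne).fun_neg
      convert h3 using 1
      case e'_4 => rfl
      case e'_5 => rfl
      have hxane : x - a ≠ 0 := ne_of_gt hxa
      have e1 : (x-a)^(m+1) = (x-a)^m * (x-a) := pow_succ _ _
      have e2 : (x-a)^(2*m) = ((x-a)^m)^2 := by rw [← pow_mul]; congr 1; ring
      have e3 : (x-a)^(2*m+1) = ((x-a)^m)^2 * (x-a) := by rw [pow_succ, e2]
      have hwne : (x-a)^m ≠ 0 := pow_ne_zero _ hxane
      rw [hF', hp, hq]
      simp only [e1, e2, e3]
      rw [hk]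
      push_cast
      field_simp
      ring
    have hsubIcc : Icc ε b ⊆ Icc a b := Icc_subset_Icc hε.1.le le_rfl
    have hFc : ContinuousOn F (Icc ε b) := by
      refine (((hu.mono hsubIcc).pow 2).div
        ((continuous_const.mul ((continuous_id.sub continuous_const).pow (2*m+1))).continuousOn) ?_).neg
      intro x hx
      have : 0 < x - a := sub_pos.2 (lt_of_lt_of_le hε.1 hx.1)
      exact mul_ne_zero (ne_of_gt hk_pos) (pow_ne_zero _ (ne_of_gt this))
    have hsub' : Ioo ε b ⊆ Ioo a b := Ioo_subset_Ioo hε.1.le le_rfl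
    have hpq2int : IntegrableOn (fun x => (2/k) * (p x * q x)) (Ioo a b) :=
      hpqint.const_mul _
    have hF'intIoo : IntegrableOn F' (Ioo a b) := by
      rw [hF']; exact hPint.sub hpq2int
    have hFint : IntervalIntegrable F' volume ε b := by
      rw [intervalIntegrable_iff_integrableOn_Ioc_of_le hε.2.le]
      exact (hF'intIoo.mono_set hsub').congr_set_ae Ioo_ae_eq_Ioc.symm
    have hFTC : ∫ x in ε..b, F' x = F b - F ε :=
      intervalIntegral.integral_eq_sub_of_hasDerivAt_of_le hε.2.le hFc
        (fun x hx => hFd x ⟨lt_trans hε.1 hx.1, hx.2⟩) hFint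
    have hIoc : ∫ x in ε..b, F' x = ∫ x in Ioo ε b, F' x := by
      rw [intervalIntegral.integral_of_le hε.2.le, integral_Ioc_eq_integral_Ioo]
    have hsplitint : ∫ x in Ioo ε b, F' x
        = (∫ x in Ioo ε b, p x ^ 2) - (2/k) * ∫ x in Ioo ε b, p x * q x := by
      rw [hF']
      rw [integral_sub (hPint.mono_set hsub') (hpq2int.mono_set hsub'),
        integral_const_mul]
    set Iε : ℝ := ∫ x in Ioo ε b, p x ^ 2 with hIε
    set Jε : ℝ := ∫ x in Ioo ε b, p x * q x with hJε
    clear_value Iε Jε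
    have hIJ : Iε = F b - F ε + (2/k) * Jε := by
      have := hFTC
      rw [hIoc, hsplitint] at this
      linarith
    have hFb : F b ≤ 0 := by
      rw [hF]
      simp only [neg_nonpos]
      have : 0 < (b-a)^(2*m+1) := pow_pos (by linarith) _
      positivity
    have hFε : -F ε ≤ (C/k) * (ε - a) := by
      rw [hF, neg_neg]
      have hwpos : 0 < k * (ε-a)^(2*m+1) := by positivity
      rw [div_le_iff₀ hwpos]
      have h1 := hC ε hε
      have e : (ε-a)^(2*m+2) = (ε-a)^(2*m+1) * (ε-a) := pow_succ _ _
      calc u ε ^ 2 ≤ C * (ε-a)^(2*m+2) := h1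
        _ = C/k * (ε-a) * (k * (ε-a)^(2*m+1)) := by
            rw [e]; field_simp
    clear_value F F'
    have hJbound : Jε ≤ k/4 * A + 1/k * B := by
      have hptw : ∀ x ∈ Ioo ε b, p x * q x ≤ k/4 * p x ^2 + 1/k * q x ^2 := by
        intro x _
        have key4 : 4*k*(p x * q x) ≤ 4*k*(k/4 * p x^2 + 1/k * q x^2) := by
          have expand : 4*k*(k/4 * p x^2 + 1/k * q x^2) = k^2 * p x^2 + 4 * q x^2 := by
            field_simp
          rw [expand]
          nlinarith [sq_nonneg (k * p x - 2 * q x)]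
        exact le_of_mul_le_mul_left key4 (by positivity)
      have hPk : IntegrableOn (fun x => k/4 * p x^2) (Ioo a b) := hPint.const_mul _
      have hQk : IntegrableOn (fun x => 1/k * q x^2) (Ioo a b) := hQint.const_mul _
      have hint2 : IntegrableOn (fun x => k/4 * p x^2 + 1/k * q x^2) (Ioo a b) :=
        hPk.add hQk
      have h1 : Jε ≤ ∫ x in Ioo ε b, (k/4 * p x^2 + 1/k * q x^2) := by
        rw [hJε]
        exact setIntegral_mono_on (hpqint.mono_set hsub') (hint2.mono_set hsub')
          measurableSet_Ioo hptw
      have h2 : (∫ x in Ioo ε b, (k/4 * p x^2 + 1/k * q x^2))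
          ≤ ∫ x in Ioo a b, (k/4 * p x^2 + 1/k * q x^2) := by
        refine setIntegral_mono_set hint2 ?_ (HasSubset.Subset.eventuallyLE hsub')
        refine (ae_restrict_iff' measurableSet_Ioo).2 (Filter.Eventually.of_forall fun x _ => ?_)
        have := sq_nonneg (p x); have := sq_nonneg (q x); positivity
      have h3 : (∫ x in Ioo a b, (k/4 * p x^2 + 1/k * q x^2)) = k/4 * A + 1/k * B := by
        rw [hA, hB, integral_add hPk hQk, integral_const_mul, integral_const_mul]
      linarith
    -- split A
    have hsplit : Ioo a b = Ioc a ε ∪ Ioo ε b := by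
      ext x
      simp only [mem_Ioo, mem_Ioc, mem_union]
      constructor
      · rintro ⟨h1, h2⟩
        rcases le_or_gt x ε with h | h
        · exact Or.inl ⟨h1, h⟩
        · exact Or.inr ⟨h, h2⟩
      · rintro (⟨h1, h2⟩ | ⟨h1, h2⟩)
        · exact ⟨h1, lt_of_le_of_lt h2 hε.2⟩
        · exact ⟨lt_trans hε.1 h1, h2⟩
    have hsubIoc : Ioc a ε ⊆ Ioo a b := fun x hx => ⟨hx.1, lt_of_le_of_lt hx.2 hε.2⟩
    have hdisj : Disjoint (Ioc a ε) (Ioo ε b) := by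
      refine Set.disjoint_left.2 ?_
      rintro x ⟨_, h2⟩ ⟨h3, _⟩
      exact absurd h3 (not_lt.2 h2)
    have hAsplit : A = (∫ x in Ioc a ε, p x ^ 2) + Iε := by
      rw [hA, hIε, hsplit]
      exact setIntegral_union hdisj measurableSet_Ioo (hPint.mono_set hsubIoc)
        (hPint.mono_set hsub')
    have hIocbound : (∫ x in Ioc a ε, p x ^ 2) ≤ C * (ε - a) := by
      have h1 : (∫ x in Ioc a ε, p x ^ 2) ≤ ∫ _x in Ioc a ε, C := by
        refine setIntegral_mono_on (hPint.mono_set hsubIoc)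
          (integrableOn_const measure_Ioc_lt_top.ne) measurableSet_Ioc ?_
        exact fun x hx => hPb x (hsubIoc hx)
      have h2 : (∫ _x in Ioc a ε, C) = (ε - a) * C := by
        rw [setIntegral_const, Real.volume_real_Ioc_of_le hε.1.le, smul_eq_mul]
      rw [h2] at h1
      linarith
    have hchain : (2/k) * Jε ≤ A/2 + 2/k^2 * B := by
      have h1 : (2/k) * Jε ≤ (2/k) * (k/4 * A + 1/k * B) :=
        mul_le_mul_of_nonneg_left hJbound (by positivity)
      have h2 : (2/k) * (k/4 * A + 1/k * B) = A/2 + 2/k^2 * B := by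
        field_simp; ring
      linarith
    have : Iε ≤ (C/k) * (ε - a) + (A/2 + 2/k^2 * B) := by
      rw [hIJ]; linarith
    calc A = (∫ x in Ioc a ε, p x ^ 2) + Iε := hAsplit
      _ ≤ C * (ε - a) + ((C/k) * (ε - a) + (A/2 + 2/k^2 * B)) := by linarith
      _ = (C + C/k) * (ε - a) + (A/2 + 2/k^2 * B) := by ring
  -- pass to the limit ε → a
  have hfinal : A/2 - 2/k^2 * B ≤ 0 := by
    by_contra hX
    push_neg at hX
    set X : ℝ := A/2 - 2/k^2 * B with hXdef
    set C' : ℝ := C + C/k with hC'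
    have hC0 : 0 ≤ C := le_trans (sq_nonneg _) (hPb _ hmid)
    have hC'0 : 0 ≤ C' := by
      rw [hC']; positivity
    set ε : ℝ := a + min (X/(C'+1)) ((b-a)/2) with hεdef
    have hmin_pos : 0 < min (X/(C'+1)) ((b-a)/2) := by
      apply lt_min
      · positivity
      · linarith
    have hεI : ε ∈ Ioo a b := by
      constructor
      · rw [hεdef]; linarith
      · rw [hεdef]
        have := min_le_right (X/(C'+1)) ((b-a)/2)
        linarith
    have hkey := key ε hεI
    have hεa : ε - a = min (X/(C'+1)) ((b-a)/2) := by rw [hεdef]; ring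
    have h1 : C' * (ε - a) ≤ C' * (X/(C'+1)) := by
      rw [hεa]
      exact mul_le_mul_of_nonneg_left (min_le_left _ _) hC'0
    have h2 : C' * (X/(C'+1)) < X := by
      have e : C' * (X/(C'+1)) = X * (C'/(C'+1)) := by ring
      rw [e]
      have hlt : C'/(C'+1) < 1 := (div_lt_one (by positivity)).2 (by linarith)
      calc X * (C'/(C'+1)) < X * 1 := by exact mul_lt_mul_of_pos_left hlt hX
        _ = X := mul_one X
    have : X ≤ C' * (ε - a) := by
      have := hkey
      rw [hXdef, hC']
      linarith
    linarith
  have hgoal : A ≤ 4/k^2 * B := by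
    have hr : 4/k^2 * B = 2*(2/k^2 * B) := by ring
    linarith
  exact hgoal

lemma fiber (M R : ℝ) (hR : M < R) (ψ : ℝ → ℝ) (hψ : ContDiffOn ℝ 3 ψ (Icc M R)) :
    (∫⁻ r in Icc M R, ENNReal.ofReal ((deriv ψ r)^2))
      ≤ (16/9 : ENNReal) * ∫⁻ r in Icc M R, ENNReal.ofReal
          ((deriv (fun s => deriv (fun t => (t - M)^2 * deriv ψ t) s) r)^2) := by
  have hs : UniqueDiffOn ℝ (Icc M R) := uniqueDiffOn_Icc hR
  set f0 := derivWithin ψ (Icc M R) with hf0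
  set f1 := derivWithin f0 (Icc M R) with hf1
  set f2 := derivWithin f1 (Icc M R) with hf2
  have h0 : ContDiffOn ℝ 2 f0 (Icc M R) := hψ.derivWithin hs (by norm_num)
  have h1 : ContDiffOn ℝ 1 f1 (Icc M R) := h0.derivWithin hs (by norm_num)
  have c0 : ContinuousOn f0 (Icc M R) := h0.continuousOn
  have c1 : ContinuousOn f1 (Icc M R) := h1.continuousOn
  have c2 : ContinuousOn f2 (Icc M R) := h1.continuousOn_derivWithin hs (le_refl 1)
  have hIccNhds : ∀ x ∈ Ioo M R, Icc M R ∈ nhds x := fun x hx => Icc_mem_nhds hx.1 hx.2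
  have hd0 : ∀ x ∈ Ioo M R, HasDerivAt f0 (f1 x) x := fun x hx =>
    ((h0.differentiableOn (by norm_num) x (Ioo_subset_Icc_self hx)).hasDerivWithinAt).hasDerivAt
      (hIccNhds x hx)
  have hd1 : ∀ x ∈ Ioo M R, HasDerivAt f1 (f2 x) x := fun x hx =>
    ((h1.differentiableOn (by norm_num) x (Ioo_subset_Icc_self hx)).hasDerivWithinAt).hasDerivAt
      (hIccNhds x hx)
  have hder_eq : ∀ x ∈ Ioo M R, deriv ψ x = f0 x := fun x hx =>
    (derivWithin_of_mem_nhds (hIccNhds x hx)).symm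
  set g0 : ℝ → ℝ := fun r => (r - M)^2 * f0 r with hg0
  set g1 : ℝ → ℝ := fun r => 2*(r-M)*f0 r + (r-M)^2 * f1 r with hg1
  set G2 : ℝ → ℝ := fun r => 2*f0 r + 4*(r-M)*f1 r + (r-M)^2 * f2 r with hG2
  have hg0d : ∀ x ∈ Ioo M R, HasDerivAt g0 (g1 x) x := by
    intro x hx
    have hsq : HasDerivAt (fun y => (y - M)^2) (2*(x-M)) x := by
      simpa using ((hasDerivAt_id x).sub_const M).fun_pow 2
    have h := hsq.fun_mul (hd0 x hx)
    convert h using 1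
  have hg1d : ∀ x ∈ Ioo M R, HasDerivAt g1 (G2 x) x := by
    intro x hx
    have hlin : HasDerivAt (fun y => 2*(y - M)) 2 x := by
      simpa using ((hasDerivAt_id x).sub_const M).const_mul 2
    have hsq : HasDerivAt (fun y => (y - M)^2) (2*(x-M)) x := by
      simpa using ((hasDerivAt_id x).sub_const M).fun_pow 2
    have h := (hlin.fun_mul (hd0 x hx)).fun_add (hsq.fun_mul (hd1 x hx))
    convert h using 1
    case e'_4 => rfl
    case e'_5 => rfl
    rw [hG2]; ring
  have hg_eq : ∀ x ∈ Ioo M R,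
      deriv (fun s => deriv (fun t => (t - M)^2 * deriv ψ t) s) x = G2 x := by
    intro x hx
    have hinner : ∀ y ∈ Ioo M R, deriv (fun t => (t-M)^2 * deriv ψ t) y = g1 y := by
      intro y hy
      have heq : (fun t => (t-M)^2 * deriv ψ t) =ᶠ[nhds y] g0 := by
        filter_upwards [isOpen_Ioo.mem_nhds hy] with t ht
        rw [hg0, hder_eq t ht]
      rw [heq.deriv_eq]
      exact (hg0d y hy).deriv
    have heq2 : (fun s => deriv (fun t => (t-M)^2 * deriv ψ t) s) =ᶠ[nhds x] g1 := by
      filter_upwards [isOpen_Ioo.mem_nhds hx] with y hy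
      exact hinner y hy
    rw [heq2.deriv_eq]
    exact (hg1d x hx).deriv
  -- bounds
  obtain ⟨K0, hK0⟩ := (isCompact_Icc : IsCompact (Icc M R)).exists_bound_of_continuousOn c0
  obtain ⟨K1, hK1⟩ := (isCompact_Icc : IsCompact (Icc M R)).exists_bound_of_continuousOn c1
  obtain ⟨K2, hK2⟩ := (isCompact_Icc : IsCompact (Icc M R)).exists_bound_of_continuousOn c2
  have hMmem : M ∈ Icc M R := left_mem_Icc.2 hR.le
  have hK0' : 0 ≤ K0 := le_trans (norm_nonneg _) (hK0 M hMmem)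
  have hK1' : 0 ≤ K1 := le_trans (norm_nonneg _) (hK1 M hMmem)
  have hK2' : 0 ≤ K2 := le_trans (norm_nonneg _) (hK2 M hMmem)
  have habs0 : ∀ x ∈ Icc M R, |f0 x| ≤ K0 := fun x hx => by
    rw [← Real.norm_eq_abs]; exact hK0 x hx
  have habs1 : ∀ x ∈ Icc M R, |f1 x| ≤ K1 := fun x hx => by
    rw [← Real.norm_eq_abs]; exact hK1 x hx
  have habs2 : ∀ x ∈ Icc M R, |f2 x| ≤ K2 := fun x hx => by
    rw [← Real.norm_eq_abs]; exact hK2 x hx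
  -- step 2 : m = 0 with u = g1
  have hg1cIcc : ContinuousOn g1 (Icc M R) := by
    rw [hg1]
    exact (((continuous_const.mul ((continuous_id.sub continuous_const))).continuousOn.mul c0)).add
      ((((continuous_id.sub continuous_const).pow 2).continuousOn).mul c1)
  have hg0cIcc : ContinuousOn g0 (Icc M R) := by
    rw [hg0]
    exact (((continuous_id.sub continuous_const).pow 2).continuousOn).mul c0
  have hG2cIoo : ContinuousOn G2 (Ioo M R) := by
    rw [hG2]
    refine ContinuousOn.add (ContinuousOn.add ?_ ?_) ?_
    · exact continuousOn_const.mul (c0.mono Ioo_subset_Icc_self)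
    · exact ((continuous_const.mul (continuous_id.sub continuous_const)).continuousOn).mul
        (c1.mono Ioo_subset_Icc_self)
    · exact (((continuous_id.sub continuous_const).pow 2).continuousOn).mul
        (c2.mono Ioo_subset_Icc_self)
  have hboundC2 : ∀ r ∈ Ioo M R, g1 r ^ 2 ≤ ((2*K0 + (R-M)*K1)^2) * (r - M)^(2*0+2) := by
    intro r hr
    have hrI : r ∈ Icc M R := Ioo_subset_Icc_self hr
    have hrm : 0 ≤ r - M := by linarith [hr.1]
    have hx : |2*f0 r + (r-M)*f1 r| ≤ 2*K0 + (R-M)*K1 := by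
      calc |2*f0 r + (r-M)*f1 r| ≤ |2*f0 r| + |(r-M)*f1 r| := abs_add_le _ _
        _ = 2*|f0 r| + (r-M)*|f1 r| := by
            rw [abs_mul, abs_mul, abs_of_nonneg hrm]
            simp [abs_of_nonneg]
        _ ≤ 2*K0 + (R-M)*K1 := by
            have h1 := habs0 r hrI
            have h2 := habs1 r hrI
            have : (r-M)*|f1 r| ≤ (R-M)*K1 := by
              apply mul_le_mul (by linarith [hr.2]) h2 (abs_nonneg _) (by linarith)
            linarith
    have hsq : (2*f0 r + (r-M)*f1 r)^2 ≤ (2*K0 + (R-M)*K1)^2 := sq_le_sq' (by linarith [abs_le.1 hx]) (abs_le.1 hx).2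
    have hg1r : g1 r = (r-M) * (2*f0 r + (r-M)*f1 r) := by rw [hg1]; ring
    calc g1 r ^2 = (r-M)^2 * (2*f0 r + (r-M)*f1 r)^2 := by rw [hg1r]; ring
      _ ≤ (r-M)^2 * (2*K0 + (R-M)*K1)^2 := by
          exact mul_le_mul_of_nonneg_left hsq (by positivity)
      _ = ((2*K0 + (R-M)*K1)^2) * (r - M)^(2*0+2) := by norm_num; ring
  have hboundD2 : ∀ r ∈ Ioo M R, G2 r ^ 2 ≤ ((2*K0 + 4*(R-M)*K1 + (R-M)^2*K2)^2) * (r - M)^(2*0) := by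
    intro r hr
    have hrI : r ∈ Icc M R := Ioo_subset_Icc_self hr
    have hrm : 0 ≤ r - M := by linarith [hr.1]
    have hrR : r - M ≤ R - M := by linarith [hr.2]
    have hx : |G2 r| ≤ 2*K0 + 4*(R-M)*K1 + (R-M)^2*K2 := by
      rw [hG2]
      have h1 := habs0 r hrI
      have h2 := habs1 r hrI
      have h3 := habs2 r hrI
      calc |2*f0 r + 4*(r-M)*f1 r + (r-M)^2*f2 r|
          ≤ |2*f0 r + 4*(r-M)*f1 r| + |(r-M)^2*f2 r| := abs_add_le _ _
        _ ≤ |2*f0 r| + |4*(r-M)*f1 r| + |(r-M)^2*f2 r| := by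
            have := abs_add_le (2*f0 r) (4*(r-M)*f1 r); linarith
        _ = 2*|f0 r| + 4*(r-M)*|f1 r| + (r-M)^2*|f2 r| := by
            rw [abs_mul, abs_mul, abs_mul, abs_mul]
            rw [abs_of_nonneg hrm, abs_sq]
            norm_num
        _ ≤ 2*K0 + 4*(R-M)*K1 + (R-M)^2*K2 := by
            have e1 : 4*(r-M)*|f1 r| ≤ 4*(R-M)*K1 := by
              have : (r-M)*|f1 r| ≤ (R-M)*K1 :=
                mul_le_mul hrR h2 (abs_nonneg _) (by linarith)
              linarith
            have e2 : (r-M)^2*|f2 r| ≤ (R-M)^2*K2 := by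
              apply mul_le_mul (by nlinarith) h3 (abs_nonneg _) (by positivity)
            linarith
    have := sq_le_sq' (by linarith [abs_le.1 hx]) (abs_le.1 hx).2
    calc G2 r^2 ≤ (2*K0 + 4*(R-M)*K1 + (R-M)^2*K2)^2 := this
      _ = ((2*K0 + 4*(R-M)*K1 + (R-M)^2*K2)^2) * (r - M)^(2*0) := by norm_num
  have step2 := hardy_step M R hR 0 g1 G2 hg1cIcc hg1d hG2cIoo hboundC2 hboundD2
  -- step 1 : m = 1 with u = g0
  have hboundC1 : ∀ r ∈ Ioo M R, g0 r ^ 2 ≤ (K0^2) * (r - M)^(2*1+2) := by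
    intro r hr
    have hrI : r ∈ Icc M R := Ioo_subset_Icc_self hr
    have h1 := habs0 r hrI
    have hsq : f0 r^2 ≤ K0^2 := sq_le_sq' (by linarith [abs_le.1 h1]) (abs_le.1 h1).2
    calc g0 r^2 = (r-M)^4 * f0 r^2 := by rw [hg0]; ring
      _ ≤ (r-M)^4 * K0^2 := mul_le_mul_of_nonneg_left hsq (by positivity)
      _ = (K0^2) * (r - M)^(2*1+2) := by norm_num; ring
  have hboundD1 : ∀ r ∈ Ioo M R, g1 r ^ 2 ≤ ((2*K0 + (R-M)*K1)^2) * (r - M)^(2*1) := by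
    intro r hr
    have := hboundC2 r hr
    calc g1 r ^2 ≤ ((2*K0 + (R-M)*K1)^2) * (r - M)^(2*0+2) := this
      _ = ((2*K0 + (R-M)*K1)^2) * (r - M)^(2*1) := by norm_num
  have hg1cIoo : ContinuousOn g1 (Ioo M R) := hg1cIcc.mono Ioo_subset_Icc_self
  have step1 := hardy_step M R hR 1 g0 g1 hg0cIcc hg0d hg1cIoo hboundC1 hboundD1
  -- identify the integrands
  have hIooMeas : MeasurableSet (Ioo M R) := measurableSet_Ioo
  have hA0eq : (∫ r in Ioo M R, (g0 r / (r - M)^(1+1))^2) = ∫ r in Ioo M R, f0 r^2 := by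
    refine setIntegral_congr_fun hIooMeas fun r hr => ?_
    have hrm : r - M ≠ 0 := (sub_pos.2 hr.1).ne'
    rw [hg0]
    field_simp
    ring
  have hA2eq : (∫ r in Ioo M R, (G2 r / (r - M)^0)^2) = ∫ r in Ioo M R, G2 r^2 := by
    refine setIntegral_congr_fun hIooMeas fun r hr => ?_
    norm_num
  -- chain of real inequalities
  have hreal : (∫ r in Ioo M R, f0 r^2) ≤ 16/9 * ∫ r in Ioo M R, G2 r^2 := by
    rw [← hA0eq, ← hA2eq]
    have e1 : (4:ℝ)/(2*(1:ℕ)+1)^2 = 4/9 := by norm_num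
    have e2 : (4:ℝ)/(2*(0:ℕ)+1)^2 = 4 := by norm_num
    rw [e1] at step1
    rw [e2] at step2
    have hstep2' : (∫ r in Ioo M R, (g1 r / (r - M)^(0+1))^2)
        = ∫ r in Ioo M R, (g1 r / (r - M)^1)^2 := by norm_num
    rw [hstep2'] at step2
    calc (∫ r in Ioo M R, (g0 r / (r - M)^(1+1))^2)
        ≤ 4/9 * ∫ r in Ioo M R, (g1 r / (r - M)^1)^2 := step1
      _ ≤ 4/9 * (4 * ∫ r in Ioo M R, (G2 r / (r - M)^0)^2) :=
          mul_le_mul_of_nonneg_left step2 (by norm_num)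
      _ = 16/9 * ∫ r in Ioo M R, (G2 r / (r - M)^0)^2 := by ring
  -- integrability
  have hfin : volume (Ioo M R) < ⊤ := measure_Ioo_lt_top
  have hf0sqint : IntegrableOn (fun r => f0 r^2) (Ioo M R) := by
    refine intOn_bdd hIooMeas hfin ((c0.mono Ioo_subset_Icc_self).pow 2) (K := K0^2) ?_
    intro x hx
    have h1 := habs0 x (Ioo_subset_Icc_self hx)
    rw [abs_of_nonneg (sq_nonneg _)]
    exact sq_le_sq' (by linarith [abs_le.1 h1]) (abs_le.1 h1).2
  have hG2sqint : IntegrableOn (fun r => G2 r^2) (Ioo M R) := by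
    refine intOn_bdd hIooMeas hfin (hG2cIoo.pow 2) (K := (2*K0 + 4*(R-M)*K1 + (R-M)^2*K2)^2) ?_
    intro x hx
    rw [abs_of_nonneg (sq_nonneg _)]
    have := hboundD2 x hx
    calc G2 x^2 ≤ ((2*K0 + 4*(R-M)*K1 + (R-M)^2*K2)^2) * (x - M)^(2*0) := this
      _ = (2*K0 + 4*(R-M)*K1 + (R-M)^2*K2)^2 := by norm_num
  -- convert to lintegrals
  have hLHS : (∫⁻ r in Icc M R, ENNReal.ofReal ((deriv ψ r)^2))
      = ENNReal.ofReal (∫ r in Ioo M R, f0 r^2) := by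
    rw [← setLIntegral_congr (Ioo_ae_eq_Icc (μ := volume) (a := M) (b := R))]
    rw [setLIntegral_congr_fun hIooMeas
      (fun r hr => by rw [hder_eq r hr])]
    rw [ofReal_integral_eq_lintegral_ofReal hf0sqint
      ((ae_restrict_iff' hIooMeas).2 (Filter.Eventually.of_forall fun x _ => sq_nonneg _))]
  have hRHS : (∫⁻ r in Icc M R, ENNReal.ofReal
        ((deriv (fun s => deriv (fun t => (t - M)^2 * deriv ψ t) s) r)^2))
      = ENNReal.ofReal (∫ r in Ioo M R, G2 r^2) := by
    rw [← setLIntegral_congr (Ioo_ae_eq_Icc (μ := volume) (a := M) (b := R))]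
    rw [setLIntegral_congr_fun hIooMeas
      (fun r hr => by rw [hg_eq r hr])]
    rw [ofReal_integral_eq_lintegral_ofReal hG2sqint
      ((ae_restrict_iff' hIooMeas).2 (Filter.Eventually.of_forall fun x _ => sq_nonneg _))]
  rw [hLHS, hRHS]
  have h169 : (16/9 : ENNReal) = ENNReal.ofReal (16/9 : ℝ) := by
    rw [ENNReal.ofReal_div_of_pos (by norm_num)]
    norm_num
  rw [h169, ← ENNReal.ofReal_mul (by norm_num : (0:ℝ) ≤ 16/9)]
  exact ENNReal.ofReal_le_ofReal hreal


/-- **The chain of boundary-free Hardy inequalities (5.30)–(5.31):** composing the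
Hardy inequality (4.3) with exponents `p = −2` and `p = −4` fiberwise in `v` gives
`∫∫ (∂_rφ)² ≤ (16/9)·∫∫ (∂_r∂_r((r−M)²∂_rφ))²`. -/
theorem hardy_chain (M R : ℝ) (hM : 0 < M) (hR : M < R) (φ : ℝ → ℝ → ℝ)
    (hreg : ∀ v ∈ Set.Ici (0 : ℝ), ContDiffOn ℝ 3 (fun r => φ v r) (Set.Icc M R))
    (hmeas0 : Measurable (Function.uncurry φ))
    (hmeas1 : Measurable (Function.uncurry (pr φ)))
    (hmeas2 : Measurable (Function.uncurry (pr (pr φ))))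
    (hmeas3 : Measurable (Function.uncurry (pr (pr (pr φ))))) :
    (∫⁻ v in Set.Ici (0 : ℝ), ∫⁻ r in Set.Icc M R,
        ENNReal.ofReal ((pr φ v r) ^ 2))
      ≤ (16 / 9 : ENNReal) *
        ∫⁻ v in Set.Ici (0 : ℝ), ∫⁻ r in Set.Icc M R,
          ENNReal.ofReal
            ((pr (pr (fun v' r' => (r' - M) ^ 2 * pr φ v' r')) v r) ^ 2) := by
  have hmain : ∀ v ∈ Set.Ici (0:ℝ),
      (∫⁻ r in Set.Icc M R, ENNReal.ofReal ((pr φ v r) ^ 2))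
        ≤ (16/9 : ENNReal) * ∫⁻ r in Set.Icc M R,
            ENNReal.ofReal ((pr (pr (fun v' r' => (r' - M) ^ 2 * pr φ v' r')) v r) ^ 2) := by
    intro v hv
    have := fiber M R hR (φ v) (hreg v hv)
    simpa only [pr] using this
  calc (∫⁻ v in Set.Ici (0 : ℝ), ∫⁻ r in Set.Icc M R, ENNReal.ofReal ((pr φ v r) ^ 2))
      ≤ ∫⁻ v in Set.Ici (0 : ℝ), (16/9 : ENNReal) * ∫⁻ r in Set.Icc M R,
          ENNReal.ofReal ((pr (pr (fun v' r' => (r' - M) ^ 2 * pr φ v' r')) v r) ^ 2) := by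
        refine lintegral_mono_ae ((ae_restrict_iff' measurableSet_Ici).2
          (Filter.Eventually.of_forall fun v hv => hmain v hv))
    _ = (16/9 : ENNReal) * ∫⁻ v in Set.Ici (0 : ℝ), ∫⁻ r in Set.Icc M R,
          ENNReal.ofReal ((pr (pr (fun v' r' => (r' - M) ^ 2 * pr φ v' r')) v r) ^ 2) := by
        refine lintegral_const_mul' _ _ ?_
        exact (ENNReal.div_lt_top (by norm_num) (by norm_num)).ne
end

section
/- Let M > 0, R > M, and p ∈ ℝ with p ≠ −1. Let f: (M,R] → ℝ be C¹ with lim_{r→M⁺} (r−M)^{p+1}·f(r)² = 0. If ∫_M^R (r−M)^{p+2}·f'(r)² dr < ∞, then ∫_M^R (r−M)^p·f(r)² dr < ∞ and ∫_M^R (r−M)^p·f(r)² dr ≤ (4/(p+1)²)·∫_M^R (r−M)^{p+2}·f'(r)² dr + (2/(p+1))·(R−M)^{p+1}·f(R)². -/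
open MeasureTheory Set

/-- Pure algebra: the Young-inequality step of the Hardy inequality. -/
lemma hardy_ptwise (p t u v : ℝ) (ht : 0 < t) (hc : p + 1 ≠ 0) :
    t ^ p * u ^ 2 ≤
      (2 / (p + 1)) * ((p + 1) * t ^ p * u ^ 2 + 2 * t ^ (p + 1) * u * v)
        + (4 / (p + 1) ^ 2) * (t ^ (p + 2) * v ^ 2) := by
  have e1 : t ^ (p + 1) = t ^ p * t := by rw [Real.rpow_add ht, Real.rpow_one]
  have e2 : t ^ (p + 2) = t ^ p * t ^ 2 := by
    rw [Real.rpow_add ht, show (2:ℝ) = ((2:ℕ):ℝ) by norm_num, Real.rpow_natCast]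
  rw [e1, e2, ← sub_nonneg]
  have hw : (0:ℝ) ≤ t ^ p := Real.rpow_nonneg ht.le p
  have key : (2 / (p + 1)) * ((p + 1) * t ^ p * u ^ 2 + 2 * (t ^ p * t) * u * v)
        + (4 / (p + 1) ^ 2) * (t ^ p * t ^ 2 * v ^ 2) - t ^ p * u ^ 2
      = t ^ p * ((p + 1) * u + 2 * (t * v)) ^ 2 / (p + 1) ^ 2 := by
    field_simp
    ring
  rw [key]
  positivity

/-- The key estimate on `Ioc ε R`. -/
lemma hardy_key (M R p : ℝ) (hR : M < R) (hc : p + 1 ≠ 0) (f : ℝ → ℝ)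
    (hf : ContDiffOn ℝ 1 f (Set.Ioc M R))
    (hint : MeasureTheory.IntegrableOn
      (fun r => (r - M) ^ (p + 2) * (deriv f r) ^ 2) (Set.Ioc M R))
    (ε : ℝ) (hε : ε ∈ Set.Ioc M R) :
    MeasureTheory.IntegrableOn (fun r => (r - M) ^ p * (f r) ^ 2) (Set.Ioc ε R) ∧
    (∫ r in Set.Ioc ε R, (r - M) ^ p * (f r) ^ 2)
      ≤ (2 / (p + 1)) * ((R - M) ^ (p + 1) * (f R) ^ 2 - (ε - M) ^ (p + 1) * (f ε) ^ 2)
        + (4 / (p + 1) ^ 2) *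
          (∫ r in Set.Ioc M R, (r - M) ^ (p + 2) * (deriv f r) ^ 2) := by
  have hεR : ε ≤ R := hε.2
  have hsub : Icc ε R ⊆ Ioc M R := fun x hx => ⟨lt_of_lt_of_le hε.1 hx.1, hx.2⟩
  have hfc : ContinuousOn f (Ioc M R) := hf.continuousOn
  -- continuity of the weight functions on Icc ε R
  have hwc : ∀ q : ℝ, ContinuousOn (fun r : ℝ => (r - M) ^ q) (Icc ε R) := by
    intro q
    refine (continuousOn_id.sub continuousOn_const).rpow_const fun x hx => Or.inl ?_
    exact sub_ne_zero_of_ne (lt_of_lt_of_le hε.1 hx.1).ne'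
  have hfcI : ContinuousOn f (Icc ε R) := hfc.mono hsub
  -- A is integrable on Ioc ε R
  have hAc : ContinuousOn (fun r : ℝ => (r - M) ^ p * (f r) ^ 2) (Icc ε R) :=
    (hwc p).mul (hfcI.pow 2)
  have hA : MeasureTheory.IntegrableOn (fun r => (r - M) ^ p * (f r) ^ 2) (Ioc ε R) :=
    (hAc.integrableOn_Icc).mono_set Ioc_subset_Icc_self
  refine ⟨hA, ?_⟩
  have hB : MeasureTheory.IntegrableOn
      (fun r => (r - M) ^ (p + 2) * (deriv f r) ^ 2) (Ioc ε R) :=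
    hint.mono_set (Ioc_subset_Ioc_left hε.1.le)
  -- g and its derivative
  set g : ℝ → ℝ := fun r => (r - M) ^ (p + 1) * (f r) ^ 2 with hg
  set D : ℝ → ℝ := fun r =>
    (p + 1) * (r - M) ^ p * (f r) ^ 2 + 2 * (r - M) ^ (p + 1) * f r * deriv f r with hD
  have hgc : ContinuousOn g (Icc ε R) := (hwc (p + 1)).mul (hfcI.pow 2)
  have hderiv : ∀ x ∈ Ioo ε R, HasDerivAt g (D x) x := by
    intro x hx
    have hxM : M < x := lt_trans hε.1 hx.1
    have hx0 : x - M ≠ 0 := sub_ne_zero_of_ne hxM.ne'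
    have hnb : Ioc M R ∈ nhds x :=
      Filter.mem_of_superset (Ioo_mem_nhds hxM hx.2) Ioo_subset_Ioc_self
    have hfx : HasDerivAt f (deriv f x) x :=
      (((hf.differentiableOn one_ne_zero) x (hsub ⟨hx.1.le, hx.2.le⟩)).differentiableAt
        hnb).hasDerivAt
    have h1 : HasDerivAt (fun r : ℝ => (r - M) ^ (p + 1)) ((p + 1) * (x - M) ^ p) x := by
      have := (Real.hasDerivAt_rpow_const (p := p + 1) (Or.inl hx0)).comp x
        ((hasDerivAt_id x).sub_const M)
      simpa [Function.comp_def] using this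
    have : HasDerivAt (fun r => (r - M) ^ (p + 1) * f r ^ 2)
        ((p + 1) * (x - M) ^ p * f x ^ 2 + (x - M) ^ (p + 1) * (((2:ℕ):ℝ) * f x ^ (2 - 1) * deriv f x)) x :=
      h1.mul (hfx.pow 2)
    convert this using 1
    simp [hD]
    ring
  -- φ := A - (4/(p+1)^2) B is integrable on Icc ε R and φ ≤ (2/(p+1)) D on Ioo ε R
  set φ : ℝ → ℝ := fun r =>
    (r - M) ^ p * (f r) ^ 2 - (4 / (p + 1) ^ 2) * ((r - M) ^ (p + 2) * (deriv f r) ^ 2)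
    with hφ
  have hφint : MeasureTheory.IntegrableOn φ (Icc ε R) :=
    MeasureTheory.IntegrableOn.congr_set_ae (hA.sub (hB.const_mul _)) Ioc_ae_eq_Icc.symm
  have hFTC : (∫ y in ε..R, φ y) ≤ (2 / (p + 1)) * g R - (2 / (p + 1)) * g ε := by
    have := intervalIntegral.integral_le_sub_of_hasDeriv_right_of_le hεR
      (g := fun r => (2 / (p + 1)) * g r) (g' := fun r => (2 / (p + 1)) * D r)
      (hgc.const_smul (2 / (p + 1))) (fun x hx => ((hderiv x hx).const_mul _).hasDerivWithinAt)
      hφint ?_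
    · exact this
    · intro x hx
      have hxM : M < x := lt_trans hε.1 hx.1
      have h := hardy_ptwise p (x - M) (f x) (deriv f x) (by linarith) hc
      simp only [hφ, hD]
      nlinarith [h]
  have hIoc : (∫ y in ε..R, φ y) = ∫ r in Ioc ε R, φ r :=
    intervalIntegral.integral_of_le hεR
  have hsplit : (∫ r in Ioc ε R, φ r)
      = (∫ r in Ioc ε R, (r - M) ^ p * (f r) ^ 2)
        - (4 / (p + 1) ^ 2) * ∫ r in Ioc ε R, (r - M) ^ (p + 2) * (deriv f r) ^ 2 := by
    rw [integral_sub hA (hB.const_mul _), integral_const_mul]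
  have hBmono : (∫ r in Ioc ε R, (r - M) ^ (p + 2) * (deriv f r) ^ 2)
      ≤ ∫ r in Ioc M R, (r - M) ^ (p + 2) * (deriv f r) ^ 2 := by
    refine setIntegral_mono_set hint ?_ ?_
    · filter_upwards [ae_restrict_mem measurableSet_Ioc] with x hx
      have : M < x := hx.1
      have h1 : (0:ℝ) ≤ (x - M) ^ (p + 2) := Real.rpow_nonneg (by linarith) _
      positivity
    · exact HasSubset.Subset.eventuallyLE (Ioc_subset_Ioc_left hε.1.le)
  have h4 : (0:ℝ) ≤ 4 / (p + 1) ^ 2 := by positivity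
  rw [hIoc, hsplit] at hFTC
  simp only [hg] at hFTC
  nlinarith [mul_le_mul_of_nonneg_left hBmono h4]

open MeasureTheory Set

/-- **The first Hardy inequality (Proposition 4.2, estimate (4.2)),** one-dimensional form:
if `∫_M^R (r−M)^{p+2} f'² dr < ∞` and `(r−M)^{p+1} f² → 0` as `r → M⁺`, then
`∫_M^R (r−M)^p f² dr` is finite and bounded by
`(4/(p+1)²)·∫_M^R (r−M)^{p+2} f'² dr + (2/(p+1))·(R−M)^{p+1} f(R)²`. -/
theorem first_hardy_inequality (M R p : ℝ) (hM : 0 < M) (hR : M < R)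
    (hp : p ≠ -1) (f : ℝ → ℝ) (hf : ContDiffOn ℝ 1 f (Set.Ioc M R))
    (hlim : Filter.Tendsto (fun r => (r - M) ^ (p + 1) * (f r) ^ 2)
      (nhdsWithin M (Set.Ioi M)) (nhds 0))
    (hint : MeasureTheory.IntegrableOn
      (fun r => (r - M) ^ (p + 2) * (deriv f r) ^ 2) (Set.Ioc M R)) :
    MeasureTheory.IntegrableOn (fun r => (r - M) ^ p * (f r) ^ 2) (Set.Ioc M R) ∧
    (∫ r in Set.Ioc M R, (r - M) ^ p * (f r) ^ 2)
      ≤ (4 / (p + 1) ^ 2) *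
          (∫ r in Set.Ioc M R, (r - M) ^ (p + 2) * (deriv f r) ^ 2)
        + (2 / (p + 1)) * (R - M) ^ (p + 1) * (f R) ^ 2 := by
  have hc : p + 1 ≠ 0 := fun h => hp (by linarith)
  set J := ∫ r in Set.Ioc M R, (r - M) ^ (p + 2) * (deriv f r) ^ 2 with hJ
  set a : ℕ → ℝ := fun n => M + (R - M) / (n + 1) with ha
  have hRM : (0:ℝ) < R - M := by linarith
  have haM : ∀ n, M < a n := by
    intro n
    have : (0:ℝ) < (R - M) / (n + 1) := by positivity
    simp only [ha]; linarith
  have haR : ∀ n, a n ≤ R := by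
    intro n
    have h1 : (R - M) / ((n:ℝ) + 1) ≤ (R - M) / 1 := by
      apply div_le_div_of_nonneg_left hRM.le one_pos
      exact_mod_cast Nat.le_add_left 1 n
    simp only [ha]; simp at h1 ⊢; linarith
  have haIoc : ∀ n, a n ∈ Set.Ioc M R := fun n => ⟨haM n, haR n⟩
  have ha_nhds : Filter.Tendsto a Filter.atTop (nhds M) := by
    have h0 : Filter.Tendsto (fun n : ℕ => (R - M) / ((n:ℝ) + 1)) Filter.atTop (nhds 0) :=
      Filter.Tendsto.div_atTop tendsto_const_nhds
        (Filter.tendsto_atTop_add_const_right _ 1 tendsto_natCast_atTop_atTop)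
    have := h0.const_add M
    simpa using this
  have ha_within : Filter.Tendsto a Filter.atTop (nhdsWithin M (Set.Ioi M)) :=
    tendsto_nhdsWithin_of_tendsto_nhds_of_eventually_within a ha_nhds
      (Filter.Eventually.of_forall fun n => haM n)
  have hg_lim : Filter.Tendsto (fun n => (a n - M) ^ (p + 1) * (f (a n)) ^ 2)
      Filter.atTop (nhds 0) := hlim.comp ha_within
  set gR := (R - M) ^ (p + 1) * (f R) ^ 2 with hgR
  have hkey := fun n => hardy_key M R p hR hc f hf hint (a n) (haIoc n)
  -- the integrand A is nonneg on each Ioc (a n) R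
  have hAnn : ∀ n, ∀ x ∈ Set.Ioc (a n) R, (0:ℝ) ≤ (x - M) ^ p * (f x) ^ 2 := by
    intro n x hx
    have : M < x := lt_of_lt_of_le (haM n) hx.1.le
    have h1 : (0:ℝ) ≤ (x - M) ^ p := Real.rpow_nonneg (by linarith) _
    positivity
  have hnorm : ∀ n, (∫ x in Set.Ioc (a n) R, ‖(x - M) ^ p * (f x) ^ 2‖)
      = ∫ x in Set.Ioc (a n) R, (x - M) ^ p * (f x) ^ 2 := by
    intro n
    refine setIntegral_congr_fun measurableSet_Ioc fun x hx => ?_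
    exact Real.norm_of_nonneg (hAnn n x hx)
  -- eventual bound
  have hbdd : ∀ᶠ n in Filter.atTop,
      (∫ x in Set.Ioc (a n) R, ‖(x - M) ^ p * (f x) ^ 2‖)
        ≤ |2 / (p + 1)| * (|gR| + 1) + (4 / (p + 1) ^ 2) * J := by
    have hsmall : ∀ᶠ n in Filter.atTop, |(a n - M) ^ (p + 1) * (f (a n)) ^ 2| < 1 := by
      have := hg_lim.eventually (eventually_abs_sub_lt 0 one_pos)
      simpa using this
    filter_upwards [hsmall] with n hn
    rw [hnorm n]
    refine le_trans (hkey n).2 ?_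
    have h1 : (2 / (p + 1)) * (gR - (a n - M) ^ (p + 1) * (f (a n)) ^ 2)
        ≤ |2 / (p + 1)| * (|gR| + 1) := by
      calc (2 / (p + 1)) * (gR - (a n - M) ^ (p + 1) * (f (a n)) ^ 2)
          ≤ |(2 / (p + 1)) * (gR - (a n - M) ^ (p + 1) * (f (a n)) ^ 2)| := le_abs_self _
        _ = |2 / (p + 1)| * |gR - (a n - M) ^ (p + 1) * (f (a n)) ^ 2| := abs_mul _ _
        _ ≤ |2 / (p + 1)| * (|gR| + 1) := by
            apply mul_le_mul_of_nonneg_left _ (abs_nonneg _)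
            calc |gR - (a n - M) ^ (p + 1) * (f (a n)) ^ 2|
                ≤ |gR| + |(a n - M) ^ (p + 1) * (f (a n)) ^ 2| := abs_sub _ _
              _ ≤ |gR| + 1 := by linarith
    rw [← hgR, ← hJ]
    linarith
  have hAint : MeasureTheory.IntegrableOn
      (fun r => (r - M) ^ p * (f r) ^ 2) (Set.Ioc M R) :=
    MeasureTheory.integrableOn_Ioc_of_intervalIntegral_norm_bounded_left
      (fun n => (hkey n).1) ha_nhds hbdd
  refine ⟨hAint, ?_⟩
  -- monotone family of sets
  have ha_anti : Antitone a := by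
    intro n m hnm
    have h1 : ((n:ℝ) + 1) ≤ ((m:ℝ) + 1) := by exact_mod_cast Nat.add_le_add_right hnm 1
    have := div_le_div_of_nonneg_left hRM.le (by positivity : (0:ℝ) < (n:ℝ)+1) h1
    simp only [ha]; linarith
  have hs_mono : Monotone fun n => Set.Ioc (a n) R := fun n m hnm =>
    Set.Ioc_subset_Ioc_left (ha_anti hnm)
  have hUnion : (⋃ n, Set.Ioc (a n) R) = Set.Ioc M R := by
    apply Set.Subset.antisymm
    · exact Set.iUnion_subset fun n => Set.Ioc_subset_Ioc_left (haM n).le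
    · intro x hx
      have : ∀ᶠ n in Filter.atTop, a n < x := ha_nhds.eventually_lt_const hx.1
      obtain ⟨n, hn⟩ := this.exists
      exact Set.mem_iUnion.2 ⟨n, hn, hx.2⟩
  have hT : Filter.Tendsto (fun n => ∫ x in Set.Ioc (a n) R, (x - M) ^ p * (f x) ^ 2)
      Filter.atTop (nhds (∫ x in Set.Ioc M R, (x - M) ^ p * (f x) ^ 2)) := by
    have := MeasureTheory.tendsto_setIntegral_of_monotone
      (fun n => measurableSet_Ioc) hs_mono (by rw [hUnion]; exact hAint)
    rwa [hUnion] at this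
  have hRHS : Filter.Tendsto
      (fun n => (2 / (p + 1)) * (gR - (a n - M) ^ (p + 1) * (f (a n)) ^ 2)
        + (4 / (p + 1) ^ 2) * J) Filter.atTop
      (nhds ((2 / (p + 1)) * gR + (4 / (p + 1) ^ 2) * J)) := by
    have := (((tendsto_const_nhds (x := gR)).sub hg_lim).const_mul (2 / (p + 1))).add
      (tendsto_const_nhds (x := (4 / (p + 1) ^ 2) * J) (f := Filter.atTop (α := ℕ)))
    simpa using this
  have hfinal := le_of_tendsto_of_tendsto' hT hRHS fun n => (hkey n).2
  simp only [hgR] at hfinal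
  linarith
end
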